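/- arXiv:math/0102221 — 3 statements merged into one kernel-verified Lean document; each statement's English description precedes it below -/
import Mathlib

section
/- Let A be a commutative ring, q ∈ A with q = q₁·q₂, J an ideal of A/(q), and u : J → A/(q) an A/(q)-linear map. If there exists g ∈ A whose image ḡ ∈ A/(q) is a nonzero element of J with u(ḡ) = 0, and q₁ = gcd(q, g) in a UFD A with g = q₁·g' and gcd(q₂, g') = 1, then q₁·u = 0, i.e., q₁·u(x) = 0 for all x ∈ J. -/
/-- (From the proof of Proposition 1.8, i ⇒ ii.) Let `A` be a UFD, `q = q₁·q₂`,
`B = A/(q)`, `J` an ideal of `B` and `u : J → B` a `B`-linear map.  Suppose `g ∈ A`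
has nonzero class `ḡ ∈ J` with `u(ḡ) = 0`, where `q₁ = gcd(q,g)`, i.e. `g = q₁·g'`
with `q₂` and `g'` having no common non-unit factor.  Then `q₁·u = 0`. -/
theorem stmt_2 (A : Type*) [CommRing A] [IsDomain A] [UniqueFactorizationMonoid A]
    (q q₁ q₂ g g' : A) (hq : q = q₁ * q₂) (hg : g = q₁ * g')
    (hcop : ∀ d : A, d ∣ q₂ → d ∣ g' → IsUnit d)
    (J : Ideal (A ⧸ Ideal.span {q}))
    (u : J →ₗ[A ⧸ Ideal.span {q}] (A ⧸ Ideal.span {q}))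
    (hgJ : Ideal.Quotient.mk (Ideal.span {q}) g ∈ J)
    (hgne : Ideal.Quotient.mk (Ideal.span {q}) g ≠ 0)
    (hug : u ⟨Ideal.Quotient.mk (Ideal.span {q}) g, hgJ⟩ = 0) :
    ∀ x : J, Ideal.Quotient.mk (Ideal.span {q}) q₁ * u x = 0 := by
  intro x
  set mk := Ideal.Quotient.mk (Ideal.span {q}) with hmk
  obtain ⟨b, hb⟩ := Ideal.Quotient.mk_surjective (u x)
  -- g * u x = 0 in B
  have key : mk g * u x = 0 := by
    have h1 : (mk g) • x = (x : A ⧸ Ideal.span {q}) • (⟨mk g, hgJ⟩ : J) := by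
      ext
      simp [Submodule.coe_smul, smul_eq_mul, mul_comm]
    calc mk g * u x = u ((mk g) • x) := by rw [map_smul]; rfl
      _ = u ((x : A ⧸ Ideal.span {q}) • (⟨mk g, hgJ⟩ : J)) := by rw [h1]
      _ = (x : A ⧸ Ideal.span {q}) • u ⟨mk g, hgJ⟩ := by rw [map_smul]
      _ = 0 := by rw [hug, smul_zero]
  have hdvd : q ∣ g * b := by
    rw [← Ideal.mem_span_singleton, ← Ideal.Quotient.eq_zero_iff_mem]
    have : mk (g * b) = mk g * u x := by rw [map_mul, hb]
    rw [this, key]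
  have hq1 : q₁ ≠ 0 := by
    rintro rfl
    apply hgne
    rw [hg, zero_mul, map_zero]
  have hdvd2 : q₂ ∣ g' * b := by
    have : q₁ * q₂ ∣ q₁ * (g' * b) := by
      rw [← hq, ← mul_assoc, ← hg]; exact hdvd
    exact (mul_dvd_mul_iff_left hq1).mp this
  have hcop' : IsRelPrime q₂ g' := fun d h1 h2 => hcop d h1 h2
  have hdvd3 : q₂ ∣ b := hcop'.dvd_of_dvd_mul_left hdvd2
  obtain ⟨c, hc⟩ := hdvd3
  have : mk q₁ * u x = mk (q₁ * b) := by rw [map_mul, hb]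
  rw [this, hc, ← mul_assoc, ← hq, Ideal.Quotient.eq_zero_iff_mem,
    Ideal.mem_span_singleton]
  exact Dvd.intro c rfl
end

section
/- Let A be an integral domain, q = q₁q₂ a nonzero element, B = A/(q), J an ideal of B, and u : J → B a B-linear map. If q₁·u = 0, then u factors through the submodule q₁·B ≅ (q₂)/(q) of B; conversely, if u factors through multiplication by q₁ (i.e., u = λ₁ ∘ w for some w : J → A/(q₂), where λ₁ : A/(q₂) → B is multiplication by q₁), then q₂·u = 0. -/
/-- (Proposition 1.8, ii ⇔ iii, algebraic core.)  Let `A` be an integral domain,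
`q = q₁·q₂` nonzero, `B = A/(q)`, `J` an ideal of `B` and `u : J → B` a `B`-linear
map.  If `q₁·u = 0` then `u` factors through the submodule `q₁·B ≅ (q₂)/(q)`, i.e.
every value of `u` lies in the ideal generated by the class of `q₂`.  Conversely,
if `u` factors through `λ₁ : A/(q₂) → B` (multiplication by `q₁`), i.e. every value
of `u` lies in the ideal generated by the class of `q₁`, then `q₂·u = 0`. -/
theorem stmt_4 (A : Type*) [CommRing A] [IsDomain A] (q q₁ q₂ : A)
    (hq : q = q₁ * q₂) (h₁ : q₁ ≠ 0) (h₂ : q₂ ≠ 0) (hq0 : q ≠ 0)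
    (J : Ideal (A ⧸ Ideal.span {q}))
    (u : J →ₗ[A ⧸ Ideal.span {q}] (A ⧸ Ideal.span {q})) :
    ((∀ x : J, Ideal.Quotient.mk (Ideal.span {q}) q₁ * u x = 0) →
      ∀ x : J, u x ∈ Ideal.span {Ideal.Quotient.mk (Ideal.span {q}) q₂}) ∧
    ((∀ x : J, u x ∈ Ideal.span {Ideal.Quotient.mk (Ideal.span {q}) q₁}) →
      ∀ x : J, Ideal.Quotient.mk (Ideal.span {q}) q₂ * u x = 0) := by
  constructor
  · intro h x
    obtain ⟨a, ha⟩ := Ideal.Quotient.mk_surjective (u x)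
    have hx := h x
    rw [← ha, ← map_mul, Ideal.Quotient.eq_zero_iff_mem, Ideal.mem_span_singleton'] at hx
    obtain ⟨c, hc⟩ := hx
    rw [hq, ← mul_assoc, mul_comm c q₁, mul_assoc] at hc
    have : a = c * q₂ := (mul_left_cancel₀ h₁ hc.symm)
    rw [← ha, this, map_mul]
    exact Ideal.mem_span_singleton'.mpr ⟨_, rfl⟩
  · intro h x
    obtain ⟨c, hc⟩ := Ideal.mem_span_singleton'.mp (h x)
    obtain ⟨d, hd⟩ := Ideal.Quotient.mk_surjective c
    rw [← hc, ← hd, ← map_mul, ← map_mul, Ideal.Quotient.eq_zero_iff_mem,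
      Ideal.mem_span_singleton']
    exact ⟨d, by rw [hq]; ring⟩
end

section
/- Let A be a UFD, q ∈ A nonzero and not a unit, B = A/(q), J an ideal of B, and u : J → B a nonzero B-linear map. If u is not injective, then there exists a factorization q = q₁q₂ with q₁ and q₂ both non-units such that q₁·u = 0. -/
/-- (Proposition 1.8, i ⇒ ii.)  Let `A` be a UFD, `q` nonzero and not a unit,
`B = A/(q)`, `J` an ideal of `B` and `u : J → B` a nonzero `B`-linear map.  If `u`
is not injective, then there is a factorization `q = q₁·q₂` with `q₁, q₂`
non-units such that `q₁·u = 0`. -/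
theorem stmt_5 (A : Type*) [CommRing A] [IsDomain A] [UniqueFactorizationMonoid A]
    (q : A) (hq0 : q ≠ 0) (hqu : ¬IsUnit q)
    (J : Ideal (A ⧸ Ideal.span {q}))
    (u : J →ₗ[A ⧸ Ideal.span {q}] (A ⧸ Ideal.span {q}))
    (hune : u ≠ 0) (hninj : ¬Function.Injective u) :
    ∃ q₁ q₂ : A, q = q₁ * q₂ ∧ ¬IsUnit q₁ ∧ ¬IsUnit q₂ ∧
      ∀ x : J, Ideal.Quotient.mk (Ideal.span {q}) q₁ * u x = 0 := by
  classical
  letI : GCDMonoid A := UniqueFactorizationMonoid.toGCDMonoid A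
  set mk := Ideal.Quotient.mk (Ideal.span {q}) with hmk
  -- get a nonzero element of the kernel
  rw [← LinearMap.ker_eq_bot] at hninj
  obtain ⟨x, hxker, hx0⟩ := Submodule.exists_mem_ne_zero_of_ne_bot hninj
  have hux : u x = 0 := hxker
  -- lift x to A
  obtain ⟨a, ha⟩ := Ideal.Quotient.mk_surjective (x : A ⧸ Ideal.span {q})
  -- key: mk a annihilates the image of u
  have hkey : ∀ y : J, mk a * u y = 0 := by
    intro y
    have h1 : (mk a) • y = ((y : A ⧸ Ideal.span {q})) • x := by
      apply Subtype.ext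
      show mk a * (y : A ⧸ Ideal.span {q}) = (y : A ⧸ Ideal.span {q}) * (x : _)
      rw [ha, mul_comm]
    calc mk a * u y = (mk a) • u y := (smul_eq_mul _ _).symm
      _ = u ((mk a) • y) := (u.map_smul _ _).symm
      _ = u (((y : A ⧸ Ideal.span {q})) • x) := by rw [h1]
      _ = ((y : A ⧸ Ideal.span {q})) • u x := u.map_smul _ _
      _ = 0 := by rw [hux, smul_zero]
  set q₁ := gcd q a with hq₁
  obtain ⟨q₂, hq2⟩ := gcd_dvd_left q a
  -- main annihilation property
  have main : ∀ y : J, mk q₁ * u y = 0 := by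
    intro y
    obtain ⟨c, hc⟩ := Ideal.Quotient.mk_surjective (u y)
    have hac : q ∣ a * c := by
      rw [← Ideal.mem_span_singleton, ← Ideal.Quotient.eq_zero_iff_mem]
      show mk (a * c) = 0
      rw [map_mul, hc, hkey y]
    have hq1c : q ∣ q₁ * c := by
      have h1 : q ∣ gcd (q * c) (a * c) := dvd_gcd (dvd_mul_right q c) hac
      have h2 : Associated (gcd (q * c) (a * c)) (gcd q a * c) := gcd_mul_right' c q a
      exact h1.trans h2.dvd
    rw [← hc, ← map_mul]
    rw [← Ideal.mem_span_singleton] at hq1c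
    exact Ideal.Quotient.eq_zero_iff_mem.mpr hq1c
  -- q₁ is not a unit
  have hq1u : ¬IsUnit q₁ := by
    intro hunit
    have hex : ∃ y : J, u y ≠ 0 := by
      by_contra h
      push_neg at h
      exact hune (LinearMap.ext fun y => by rw [h y, LinearMap.zero_apply])
    obtain ⟨y, hy⟩ := hex
    have : IsUnit (mk q₁) := hunit.map mk
    exact hy ((this.mul_right_eq_zero).mp (main y))
  -- q₂ is not a unit
  have hq2u : ¬IsUnit q₂ := by
    intro hunit
    obtain ⟨v, hv⟩ := isUnit_iff_exists_inv.mp hunit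
    have hqq1 : q ∣ q₁ := ⟨v, by rw [← mul_one q₁, ← hv, ← mul_assoc, ← hq2]⟩
    have hqa : q ∣ a := hqq1.trans (gcd_dvd_right q a)
    have : (x : A ⧸ Ideal.span {q}) = 0 := by
      rw [← ha]
      exact Ideal.Quotient.eq_zero_iff_mem.mpr (Ideal.mem_span_singleton.mpr hqa)
    exact hx0 (Subtype.ext this)
  exact ⟨q₁, q₂, hq2, hq1u, hq2u, main⟩
end
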